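/- For each x, t ∈ ℤ with x + t even and t > 1: b₁(x,t) = (1/2)·(b₁(x+1,t−1) + b₂(x+1,t−1)) and b₂(x,t) = (1/2)·(3·b₁(x−1,t−1) − b₂(x−1,t−1)). -/

import Mathlib

open scoped BigOperators

/-- The final x-coordinate of a checker path from `(0,0)` encoded by its sequence of moves
(`true` = move `(1,1)`, `false` = move `(-1,1)`). -/
def moveEndpoint {n : ℕ} (d : Fin n → Bool) : ℤ :=
  ∑ k, (if d k then (1 : ℤ) else -1)

/-- The number of turns of a checker path encoded by its sequence of moves. -/
def nturns {n : ℕ} (d : Fin n → Bool) : ℕ :=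
  ((List.ofFn d).zip (List.ofFn d).tail).countP fun p => p.1 != p.2

/-- Checker paths from `(0,0)` to `(x,t)` whose first step is to `(1,1)`,
encoded by their sequences of moves. -/
def cpaths (x t : ℤ) : Finset (Fin t.toNat → Bool) :=
  Finset.univ.filter fun d => moveEndpoint d = x ∧ (List.ofFn d).headI = true

/-- The x-coordinate of the `k`-th point of the path encoded by moves `d`. -/
def cpos {n : ℕ} (d : Fin n → Bool) (k : Fin n) : ℤ :=
  ∑ j ∈ Finset.univ.filter (fun j : Fin n => (j : ℕ) < (k : ℕ)), (if d j then (1 : ℤ) else -1)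

/-- Product of the values of the field `u` over the edges of the path encoded by `d`.
Here `u x t` denotes the value of the field on the edge with midpoint `(x + 1/2, t + 1/2)`. -/
def fieldWeight (u : ℤ → ℤ → ℝ) {n : ℕ} (d : Fin n → Bool) : ℝ :=
  ∏ k : Fin n, (if d k then u (cpos d k) (k : ℕ) else u (cpos d k - 1) (k : ℕ))

/-- Feynman checkers amplitude `a(x,t,u)` in an external field `u`, where `u x t` is
the value of the field on the edge with midpoint `(x + 1/2, t + 1/2)`. -/
noncomputable def af (u : ℤ → ℤ → ℝ) (x t : ℤ) : ℂ :=
  (Real.sqrt 2 : ℂ) ^ (1 - t) * Complex.I *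
    ∑ d ∈ cpaths x t, (-Complex.I) ^ nturns d * (fieldWeight u d : ℂ)

/-- The homogeneous magnetic field: `u(x+1/2, t+1/2) = -1` if both `x` and `t` are even,
and `+1` otherwise. -/
noncomputable def uHom : ℤ → ℤ → ℝ := fun x t => if Even x ∧ Even t then -1 else 1


-- ### Auxiliary lemmas

-- ### snoc lemmas

lemma moveEndpoint_snoc {n : ℕ} (d' : Fin n → Bool) (b : Bool) :
    moveEndpoint (Fin.snoc d' b) = moveEndpoint d' + (if b then 1 else -1) := by
  simp [moveEndpoint, Fin.sum_univ_castSucc]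

lemma headI_ofFn {n : ℕ} (d : Fin (n+1) → Bool) : (List.ofFn d).headI = d 0 := by
  rw [List.ofFn_succ]; rfl

lemma headI_ofFn_snoc {n : ℕ} (d' : Fin (n+1) → Bool) (b : Bool) :
    (List.ofFn (Fin.snoc d' b : Fin (n+2) → Bool)).headI = (List.ofFn d').headI := by
  rw [headI_ofFn, headI_ofFn]
  have : (0 : Fin (n+2)) = Fin.castSucc (0 : Fin (n+1)) := rfl
  rw [this, Fin.snoc_castSucc]

-- turns of a list
def lturns (l : List Bool) : ℕ := (l.zip l.tail).countP fun p => p.1 != p.2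

lemma lturns_nil : lturns [] = 0 := rfl
lemma lturns_single (a : Bool) : lturns [a] = 0 := rfl
lemma lturns_cons_cons (a b : Bool) (l : List Bool) :
    lturns (a :: b :: l) = (if a = b then 0 else 1) + lturns (b :: l) := by
  simp only [lturns, List.tail_cons, List.zip_cons_cons, List.countP_cons]
  cases a <;> cases b <;> simp [List.tail] <;> omega

lemma lturns_append_singleton (l : List Bool) (b : Bool) :
    lturns (l ++ [b]) = lturns l + (if l.getLastD b = b then 0 else 1) := by
  induction l with
  | nil => simp [lturns_single, lturns_nil]
  | cons a l ih =>
      cases l with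
      | nil => simp [lturns_cons_cons, lturns_single, lturns_nil, List.getLastD]; cases a <;> cases b <;> rfl
      | cons c l' =>
          simp only [List.cons_append] at *
          rw [lturns_cons_cons, ih, lturns_cons_cons]
          simp only [List.getLastD_cons]
          ring

lemma nturns_eq_lturns {n : ℕ} (d : Fin n → Bool) : nturns d = lturns (List.ofFn d) := rfl

lemma nturns_snoc {n : ℕ} (d' : Fin (n+1) → Bool) (b : Bool) :
    nturns (Fin.snoc d' b : Fin (n+2) → Bool) =
      nturns d' + (if d' (Fin.last n) = b then 0 else 1) := by
  rw [nturns_eq_lturns, nturns_eq_lturns]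
  have h : List.ofFn (Fin.snoc d' b : Fin (n+2) → Bool) = (List.ofFn d') ++ [b] := by
    rw [List.ofFn_succ' (Fin.snoc d' b : Fin (n+2) → Bool)]
    simp [List.concat_eq_append]
  rw [h, lturns_append_singleton]
  congr 1
  have h2 : List.ofFn d' = (List.ofFn fun i : Fin n => d' i.castSucc) ++ [d' (Fin.last n)] := by
    rw [List.ofFn_succ' d']; simp [List.concat_eq_append]
  rw [h2, List.getLastD_concat]

lemma cpos_snoc_castSucc {n : ℕ} (d' : Fin (n+1) → Bool) (b : Bool) (k : Fin (n+1)) :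
    cpos (Fin.snoc d' b : Fin (n+2) → Bool) k.castSucc = cpos d' k := by
  rw [cpos, cpos, Finset.sum_filter, Finset.sum_filter, Fin.sum_univ_castSucc]
  simp only [Fin.snoc_castSucc, Fin.coe_castSucc, Fin.snoc_last, Fin.val_last]
  have : ¬ (n + 1 < (k : ℕ)) := by omega
  simp [this]

lemma cpos_snoc_last {n : ℕ} (d' : Fin (n+1) → Bool) (b : Bool) :
    cpos (Fin.snoc d' b : Fin (n+2) → Bool) (Fin.last (n+1)) = moveEndpoint d' := by
  rw [cpos, moveEndpoint, Finset.sum_filter, Fin.sum_univ_castSucc]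
  simp only [Fin.snoc_castSucc, Fin.coe_castSucc, Fin.snoc_last, Fin.val_last]
  have : ∀ j : Fin (n+1), (j : ℕ) < n + 1 := fun j => j.isLt
  simp [this]

lemma fieldWeight_snoc (u : ℤ → ℤ → ℝ) {n : ℕ} (d' : Fin (n+1) → Bool) (b : Bool) :
    fieldWeight u (Fin.snoc d' b : Fin (n+2) → Bool) =
      fieldWeight u d' *
        (if b then u (moveEndpoint d') (n+1) else u (moveEndpoint d' - 1) (n+1)) := by
  rw [fieldWeight, fieldWeight, Fin.prod_univ_castSucc]
  congr 1
  · apply Finset.prod_congr rfl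
    intro k _
    rw [Fin.snoc_castSucc, cpos_snoc_castSucc]
    rfl
  · rw [Fin.snoc_last, cpos_snoc_last]
    rfl

/-- paths of given length `n` (ℕ-indexed version of `cpaths`) -/
def cP (x : ℤ) (n : ℕ) : Finset (Fin n → Bool) :=
  Finset.univ.filter fun d => moveEndpoint d = x ∧ (List.ofFn d).headI = true

lemma cpaths_eq_cP (x t : ℤ) : cpaths x t = cP x t.toNat := rfl

lemma mem_cP {x : ℤ} {n : ℕ} {d : Fin n → Bool} :
    d ∈ cP x n ↔ moveEndpoint d = x ∧ (List.ofFn d).headI = true := by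
  simp [cP]

/-- path sum over paths of length `n+1` ending with move `b` -/
noncomputable def Sb (x : ℤ) (n : ℕ) (b : Bool) : ℂ :=
  ∑ d ∈ (cP x (n+1)).filter (fun d => d (Fin.last n) = b),
    (-Complex.I) ^ nturns d * (fieldWeight uHom d : ℂ)

lemma sum_cP_split (x : ℤ) (n : ℕ) :
    ∑ d ∈ cP x (n+1), (-Complex.I) ^ nturns d * (fieldWeight uHom d : ℂ) =
      Sb x n true + Sb x n false := by
  rw [Sb, Sb,
    ← Finset.sum_filter_add_sum_filter_not (cP x (n+1)) (fun d => d (Fin.last n) = true)]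
  congr 1
  apply Finset.sum_congr _ (fun _ _ => rfl)
  apply Finset.filter_congr
  intro d _
  simp

/-- reindexing: sum over paths of length n+2 ending with `b` = sum over extensions -/
lemma Sb_succ_aux (x : ℤ) (n : ℕ) (b : Bool) :
    Sb x (n+1) b =
      ∑ d' ∈ cP (x - (if b then 1 else -1)) (n+1),
        (-Complex.I) ^ nturns (Fin.snoc d' b : Fin (n+2) → Bool) *
          (fieldWeight uHom (Fin.snoc d' b : Fin (n+2) → Bool) : ℂ) := by
  rw [Sb]
  apply Finset.sum_nbij' (fun d => Fin.init (α := fun _ => Bool) d) (fun d' => Fin.snoc d' b)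
  · intro d hd
    simp only [Finset.mem_filter, mem_cP] at hd
    obtain ⟨⟨hend, hhead⟩, hlast⟩ := hd
    have hds : Fin.snoc (Fin.init d) b = d := by rw [← hlast]; exact Fin.snoc_init_self d
    rw [mem_cP]
    constructor
    · have := moveEndpoint_snoc (Fin.init d) b
      rw [hds] at this
      omega
    · have := headI_ofFn_snoc (Fin.init d) b
      rw [hds] at this
      rw [← this, hhead]
  · intro d' hd'
    rw [mem_cP] at hd'
    simp only [Finset.mem_filter, mem_cP]
    refine ⟨⟨?_, ?_⟩, ?_⟩
    · rw [moveEndpoint_snoc, hd'.1]; ring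
    · rw [headI_ofFn_snoc, hd'.2]
    · simp
  · intro d hd
    simp only [Finset.mem_filter] at hd
    rw [← hd.2]
    exact Fin.snoc_init_self d
  · intro d' _
    exact Fin.init_snoc (α := fun _ => Bool) b d'
  · intro d hd
    simp only [Finset.mem_filter] at hd
    have hds : Fin.snoc (Fin.init d) b = d := by rw [← hd.2]; exact Fin.snoc_init_self d
    rw [hds]

lemma uHom_cast (a b : ℤ) : (uHom a b : ℂ) = if Even a ∧ Even b then -1 else 1 := by
  rw [uHom]; split <;> simp

lemma Sb_succ_true (x : ℤ) (n : ℕ) :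
    Sb x (n+1) true = (uHom (x-1) (n+1) : ℂ) *
      (Sb (x-1) n true + (-Complex.I) * Sb (x-1) n false) := by
  rw [Sb_succ_aux]
  simp only [if_true]
  rw [mul_add, Sb, Sb]
  rw [← Finset.sum_filter_add_sum_filter_not (cP (x-1) (n+1)) (fun d => d (Fin.last n) = true)]
  congr 1
  · rw [Finset.mul_sum]
    apply Finset.sum_congr
    · apply Finset.filter_congr; intro d _; simp
    · intro d' hd'
      simp only [Finset.mem_filter, mem_cP] at hd'
      rw [nturns_snoc, fieldWeight_snoc, hd'.1.1, if_pos rfl, if_pos hd'.2, pow_add, pow_zero]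
      push_cast
      ring
  · rw [Finset.mul_sum, Finset.mul_sum]
    apply Finset.sum_congr
    · apply Finset.filter_congr; intro d _; simp
    · intro d' hd'
      simp only [Finset.mem_filter, mem_cP] at hd'
      have hne : ¬ (d' (Fin.last n) = true) := by simp [hd'.2]
      rw [nturns_snoc, fieldWeight_snoc, hd'.1.1, if_pos rfl, if_neg hne, pow_add, pow_one]
      push_cast
      ring

lemma Sb_succ_false (x : ℤ) (n : ℕ) :
    Sb x (n+1) false = (uHom x (n+1) : ℂ) *
      ((-Complex.I) * Sb (x+1) n true + Sb (x+1) n false) := by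
  rw [Sb_succ_aux]
  simp only [Bool.false_eq_true, if_false]
  have hx : x - (-1) = x + 1 := by ring
  rw [hx, mul_add, Sb, Sb]
  rw [← Finset.sum_filter_add_sum_filter_not (cP (x+1) (n+1)) (fun d => d (Fin.last n) = true)]
  congr 1
  · rw [Finset.mul_sum, Finset.mul_sum]
    apply Finset.sum_congr
    · apply Finset.filter_congr; intro d _; simp
    · intro d' hd'
      simp only [Finset.mem_filter, mem_cP] at hd'
      have hne : ¬ (d' (Fin.last n) = false) := by simp [hd'.2]
      rw [nturns_snoc, fieldWeight_snoc, hd'.1.1, if_neg hne,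
        if_neg (Bool.false_ne_true), pow_add, pow_one]
      have : x + 1 - 1 = x := by ring
      rw [this]
      push_cast
      ring
  · rw [Finset.mul_sum]
    apply Finset.sum_congr
    · apply Finset.filter_congr; intro d _; simp
    · intro d' hd'
      simp only [Finset.mem_filter, mem_cP] at hd'
      have heq : d' (Fin.last n) = false := by simp at hd'; simp [hd'.2]
      rw [nturns_snoc, fieldWeight_snoc, hd'.1.1, if_pos heq,
        if_neg (Bool.false_ne_true), pow_add, pow_zero]
      have : x + 1 - 1 = x := by ring
      rw [this]
      push_cast
      ring

-- ### base case : paths of length 1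
lemma fin_one_const (d : Fin 1 → Bool) : d = fun _ => d 0 := by
  funext i
  congr
  exact Subsingleton.elim i 0

lemma Sb_zero (x : ℤ) (b : Bool) :
    Sb x 0 b = if x = 1 ∧ b = true then -1 else 0 := by
  classical
  have hme : ∀ c : Bool, moveEndpoint (fun _ : Fin 1 => c) = if c then 1 else -1 := by
    intro c; rw [moveEndpoint, Fin.sum_univ_one]
  have hhead : ∀ c : Bool, (List.ofFn (fun _ : Fin 1 => c)).headI = c := by
    intro c; rw [headI_ofFn]
  have hnt : ∀ c : Bool, nturns (fun _ : Fin 1 => c) = 0 := fun c => rfl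
  have hcpos : ∀ c : Bool, cpos (fun _ : Fin 1 => c) 0 = 0 := by
    intro c
    simp [cpos]
  have hfw : ∀ c : Bool, fieldWeight uHom (fun _ : Fin 1 => c) = if c then -1 else 1 := by
    intro c
    rw [fieldWeight, Fin.prod_univ_one]
    cases c
    · rw [if_neg (by simp), if_neg (by simp), hcpos false]
      simp [uHom]
    · rw [if_pos rfl, if_pos rfl, hcpos true]
      simp [uHom]
  rw [Sb]
  rw [show (cP x 1).filter (fun d => d (Fin.last 0) = b) =
      Finset.univ.filter (fun d : Fin 1 → Bool =>
        (moveEndpoint d = x ∧ (List.ofFn d).headI = true) ∧ d (Fin.last 0) = b) from by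
    rw [cP, Finset.filter_filter]]
  rw [Finset.sum_filter]
  rw [Fintype.sum_equiv (Equiv.funUnique (Fin 1) Bool) _
    (fun c => if (moveEndpoint (fun _ : Fin 1 => c) = x ∧
        (List.ofFn (fun _ : Fin 1 => c)).headI = true) ∧ (fun _ : Fin 1 => c) (Fin.last 0) = b
      then (-Complex.I) ^ nturns (fun _ : Fin 1 => c) * (fieldWeight uHom (fun _ : Fin 1 => c) : ℂ)
      else 0)
    (fun d => by
      conv_lhs => rw [fin_one_const d]
      rfl)]
  rw [Fintype.sum_bool]
  rw [hme, hme, hhead, hhead, hnt, hnt, hfw, hfw]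
  simp only [if_pos rfl, Bool.false_eq_true, if_neg (Bool.false_ne_true), false_and, and_false,
    if_false, add_zero, pow_zero, one_mul]
  by_cases hx : x = 1
  · subst hx
    by_cases hb : b = true
    · subst hb
      norm_num
    · rw [if_neg (by tauto), if_neg (by tauto)]
  · rw [if_neg (by tauto), if_neg (by tauto)]

-- ### parity: Sb · · true is real, Sb · · false is purely imaginary
lemma Sb_parity (n : ℕ) : ∀ x : ℤ,
    ∃ r s : ℝ, Sb x n true = (r : ℂ) ∧ Sb x n false = (s : ℂ) * Complex.I := by
  induction n with
  | zero =>
      intro x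
      refine ⟨if x = 1 then -1 else 0, 0, ?_, ?_⟩
      · rw [Sb_zero]
        split
        · rw [if_pos (by tauto)]; norm_num
        · rw [if_neg (by tauto)]; norm_num
      · rw [Sb_zero, if_neg (by simp)]
        norm_num
  | succ n ih =>
      intro x
      obtain ⟨r1, s1, h1t, h1f⟩ := ih (x - 1)
      obtain ⟨r2, s2, h2t, h2f⟩ := ih (x + 1)
      refine ⟨uHom (x-1) (n+1) * (r1 + s1), uHom x (n+1) * (s2 - r2), ?_, ?_⟩
      · rw [Sb_succ_true, h1t, h1f]
        have : (-Complex.I) * ((s1 : ℂ) * Complex.I) = (s1 : ℂ) := by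
          rw [neg_mul, mul_comm (s1 : ℂ), ← mul_assoc, Complex.I_mul_I]
          ring
        rw [this]
        push_cast
        ring
      · rw [Sb_succ_false, h2t, h2f]
        push_cast
        ring

noncomputable def pp (x : ℤ) (n : ℕ) : ℝ := (Sb x n true).re
noncomputable def qq (x : ℤ) (n : ℕ) : ℝ := (Sb x n false).im

lemma Sb_true_eq (x : ℤ) (n : ℕ) : Sb x n true = (pp x n : ℂ) := by
  obtain ⟨r, s, ht, _⟩ := Sb_parity n x
  rw [pp, ht]
  simp

lemma Sb_false_eq (x : ℤ) (n : ℕ) : Sb x n false = (qq x n : ℂ) * Complex.I := by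
  obtain ⟨r, s, _, hf⟩ := Sb_parity n x
  rw [qq, hf]
  simp

lemma pp_zero (x : ℤ) : pp x 0 = if x = 1 then -1 else 0 := by
  rw [pp, Sb_zero]
  split
  · rw [if_pos (by tauto)]; norm_num
  · rw [if_neg (by tauto)]; norm_num

lemma qq_zero (x : ℤ) : qq x 0 = 0 := by
  rw [qq, Sb_zero, if_neg (by simp)]
  norm_num

lemma pp_succ (x : ℤ) (n : ℕ) :
    pp x (n+1) = uHom (x-1) (n+1) * (pp (x-1) n + qq (x-1) n) := by
  have h := Sb_succ_true x n
  rw [Sb_true_eq, Sb_true_eq, Sb_false_eq] at h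
  have h' := congrArg Complex.re h
  simp [Complex.mul_re, Complex.add_re, Complex.mul_im] at h'
  rw [h']
lemma qq_succ (x : ℤ) (n : ℕ) :
    qq x (n+1) = uHom x (n+1) * (qq (x+1) n - pp (x+1) n) := by
  have h := Sb_succ_false x n
  rw [Sb_false_eq, Sb_true_eq, Sb_false_eq] at h
  have h' := congrArg Complex.im h
  simp [Complex.mul_re, Complex.add_im, Complex.mul_im] at h'
  rw [h']
  ring

-- uHom evaluation
lemma uHom_odd_fst {x : ℤ} (t : ℤ) (h : ¬ Even x) : uHom x t = 1 := by
  rw [uHom, if_neg]; tauto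
lemma uHom_odd_snd (x : ℤ) {t : ℤ} (h : ¬ Even t) : uHom x t = 1 := by
  rw [uHom, if_neg]; tauto
lemma uHom_even {x t : ℤ} (hx : Even x) (ht : Even t) : uHom x t = -1 := by
  rw [uHom, if_pos ⟨hx, ht⟩]

-- ### arithmetic invariants on the sublattices
lemma invariants (n : ℕ) : ∀ x : ℤ,
    (Even n →
      (((x + n + 1) % 4 = 0 → pp x n + qq x n = 0) ∧
       ((x + n + 1) % 4 = 2 → 2 * qq x n = qq (x+2) n - pp (x+2) n))) ∧
    (¬ Even n →
      ((x + n + 1) % 4 = 2 → pp x n = 0 ∧ qq x n = qq (x+2) n - pp (x+2) n)) := by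
  induction n with
  | zero =>
      intro x
      refine ⟨fun _ => ⟨?_, ?_⟩, fun h => absurd Even.zero h⟩
      · intro h4
        have hx : x ≠ 1 := by omega
        rw [pp_zero, qq_zero, if_neg hx]; ring
      · intro h4
        have hx : x + 2 ≠ 1 := by omega
        rw [qq_zero, qq_zero, pp_zero, if_neg hx]; ring
  | succ n ih =>
      intro x
      constructor
      · -- index n+1 has Even (n+1) : time n+2 odd is wrong... here Even (n+1) means n odd
        intro hev
        have hodd : ¬ Even n := by
          rw [Nat.even_add_one] at hev; exact fun h => hev h
        have hn1 : (n : ℤ) % 2 = 1 := by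
          rw [Nat.not_even_iff] at hodd; omega
        constructor
        · -- O1 at time n+2
          intro h4
          have hxodd : ¬ Even x := by rw [Int.even_iff]; omega
          have hx1e : Even (x - 1) := by rw [Int.even_iff]; omega
          have hte : Even ((n : ℤ) + 1) := by rw [Int.even_iff]; omega
          have e1 := pp_succ x n
          have e2 := qq_succ x n
          rw [show ((n:ℕ)+1 : ℤ) = (n : ℤ) + 1 from by push_cast; ring] at e1 e2
          rw [uHom_even hx1e hte] at e1
          rw [uHom_odd_fst _ hxodd] at e2
          have hE := (ih (x-1)).2 hodd (by omega)
          rw [show x - 1 + 2 = x + 1 from by ring] at hE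
          rw [e1, e2]
          nlinarith [hE.1, hE.2]
        · -- O2 at time n+2
          intro h4
          have hxodd : ¬ Even x := by rw [Int.even_iff]; omega
          have hx2odd : ¬ Even (x + 2) := by rw [Int.even_iff]; omega
          have hx1e : Even (x + 1) := by rw [Int.even_iff]; omega
          have hte : Even ((n : ℤ) + 1) := by rw [Int.even_iff]; omega
          have e2 := qq_succ x n
          have e2' := qq_succ (x+2) n
          have e1' := pp_succ (x+2) n
          rw [show ((n:ℕ)+1 : ℤ) = (n : ℤ) + 1 from by push_cast; ring] at e2 e2' e1'
          rw [uHom_odd_fst _ hxodd] at e2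
          rw [uHom_odd_fst _ hx2odd] at e2'
          rw [show x + 2 - 1 = x + 1 from by ring] at e1'
          rw [uHom_even hx1e hte] at e1'
          have hE := (ih (x+1)).2 hodd (by omega)
          rw [show x + 1 + 2 = x + 3 from by ring] at hE
          rw [show x + 2 + 1 = x + 3 from by ring] at e2'
          rw [e2, e2', e1']
          nlinarith [hE.1, hE.2]
      · -- E at index n+1 (time n+2 even), from O at n
        intro hnev h4
        have hev : Even n := by
          rw [Nat.even_add_one] at hnev; tauto
        have hn1 : (n : ℤ) % 2 = 0 := by
          rw [Nat.even_iff] at hev; omega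
        have hto : ¬ Even ((n : ℤ) + 1) := by rw [Int.even_iff]; omega
        have e1 := pp_succ x n
        have e2 := qq_succ x n
        have e1' := pp_succ (x+2) n
        have e2' := qq_succ (x+2) n
        rw [show ((n:ℕ)+1 : ℤ) = (n : ℤ) + 1 from by push_cast; ring] at e1 e2 e1' e2'
        rw [uHom_odd_snd _ hto] at e1 e2 e1' e2'
        have hO := (ih (x-1)).1 hev
        have hO1 := hO.1 (by omega)
        have hO2 := (ih (x+1)).1 hev
        have hO2' := hO2.2 (by omega)
        rw [show x + 1 + 2 = x + 3 from by ring] at hO2'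
        rw [show x + 2 - 1 = x + 1 from by ring] at e1'
        rw [show x + 2 + 1 = x + 3 from by ring] at e2'
        constructor
        · rw [e1]; nlinarith [hO1]
        · rw [e2, e2', e1']; nlinarith [hO2']

lemma cpaths_coe (x : ℤ) (n : ℕ) : cpaths x ((n : ℤ) + 1) = cP x (n + 1) := rfl

lemma af_eval (x : ℤ) (n : ℕ) :
    af uHom x ((n : ℤ) + 1) =
      ((Real.sqrt 2 ^ (-(n : ℤ)) : ℝ) : ℂ) *
        ((pp x n : ℂ) * Complex.I - (qq x n : ℂ)) := by
  have hsum : (∑ d ∈ cpaths x ((n : ℤ) + 1), (-Complex.I) ^ nturns d * (fieldWeight uHom d : ℂ))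
      = Sb x n true + Sb x n false := sum_cP_split x n
  rw [af, show (1 - ((n : ℤ) + 1)) = -(n : ℤ) from by ring]
  rw [hsum, Sb_true_eq, Sb_false_eq, Complex.ofReal_zpow]
  ring_nf
  rw [Complex.I_sq]
  ring

lemma af_re (x : ℤ) (n : ℕ) :
    (af uHom x ((n : ℤ) + 1)).re = - Real.sqrt 2 ^ (-(n : ℤ)) * qq x n := by
  rw [af_eval]
  simp only [Complex.mul_re, Complex.mul_im, Complex.sub_re, Complex.sub_im, Complex.ofReal_re,
    Complex.ofReal_im, Complex.I_re, Complex.I_im]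
  ring

lemma af_im (x : ℤ) (n : ℕ) :
    (af uHom x ((n : ℤ) + 1)).im = Real.sqrt 2 ^ (-(n : ℤ)) * pp x n := by
  rw [af_eval]
  simp only [Complex.mul_re, Complex.mul_im, Complex.sub_re, Complex.sub_im, Complex.ofReal_re,
    Complex.ofReal_im, Complex.I_re, Complex.I_im]
  ring


/-- `b₁(x,t) = a₁(2x-1, 2t-1, u)` for `x + t` even, and `0` for `x + t` odd. -/
noncomputable def b1 (x t : ℤ) : ℝ :=
  if Even (x + t) then (af uHom (2 * x - 1) (2 * t - 1)).re else 0

/-- `b₂(x,t) = a₂(2x-1, 2t-1, u)` for `x + t` even, and `0` for `x + t` odd. -/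
noncomputable def b2 (x t : ℤ) : ℝ :=
  if Even (x + t) then (af uHom (2 * x - 1) (2 * t - 1)).im else 0


/-- Recurrence relations on the new lattice. -/
theorem new_lattice_recurrence (x t : ℤ) (hxt : Even (x + t)) (ht : 1 < t) :
    b1 x t = (1 / 2) * (b1 (x + 1) (t - 1) + b2 (x + 1) (t - 1)) ∧
    b2 x t = (1 / 2) * (3 * b1 (x - 1) (t - 1) - b2 (x - 1) (t - 1)) := by
  obtain ⟨s, hs⟩ : ∃ s : ℕ, t = (s : ℤ) + 2 := ⟨(t - 2).toNat, by omega⟩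
  subst hs
  have hxt' : (x + ((s : ℤ) + 2)) % 2 = 0 := by
    rw [Int.even_iff] at hxt; exact hxt
  have hxe : Even (x + 1 + ((s : ℤ) + 2 - 1)) := by
    rw [Int.even_iff]; omega
  have hxe' : Even (x - 1 + ((s : ℤ) + 2 - 1)) := by
    rw [Int.even_iff]; omega
  set X := 2 * x - 1 with hX
  -- unfold the b's
  rw [b1, b2, b1, b2, b1, b2, if_pos hxt, if_pos hxt, if_pos hxe, if_pos hxe, if_pos hxe',
    if_pos hxe']
  rw [show 2 * ((s : ℤ) + 2) - 1 = ((2*s+2 : ℕ) : ℤ) + 1 from by push_cast; ring]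
  rw [show 2 * ((s : ℤ) + 2 - 1) - 1 = ((2*s : ℕ) : ℤ) + 1 from by push_cast; ring]
  rw [show 2 * (x + 1) - 1 = X + 2 from by rw [hX]; ring]
  rw [show 2 * (x - 1) - 1 = X - 2 from by rw [hX]; ring]
  rw [af_re, af_im, af_re, af_im, af_re, af_im]
  -- scalars
  set c2 : ℝ := Real.sqrt 2 ^ (-((2*s+2 : ℕ) : ℤ)) with hc2
  set c0 : ℝ := Real.sqrt 2 ^ (-((2*s : ℕ) : ℤ)) with hc0
  have hsqrt : Real.sqrt 2 ≠ 0 := by positivity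
  have hc2pos : c2 ≠ 0 := zpow_ne_zero _ hsqrt
  have hrel : c0 = 2 * c2 := by
    rw [hc0, hc2]
    rw [show -((2*s : ℕ) : ℤ) = -((2*s+2 : ℕ) : ℤ) + 2 from by push_cast; ring]
    rw [zpow_add₀ hsqrt]
    rw [show (Real.sqrt 2) ^ (2 : ℤ) = Real.sqrt 2 * Real.sqrt 2 from by
      rw [zpow_two]]
    rw [Real.mul_self_sqrt (by norm_num)]
    ring
  -- recurrences
  have hXodd : ¬ Even X := by rw [hX, Int.even_iff]; omega
  have hX1e : Even (X - 1) := by rw [hX, Int.even_iff]; omega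
  have hX1e' : Even (X + 1) := by rw [hX, Int.even_iff]; omega
  have hte : Even (((2*s+1 : ℕ) : ℤ) + 1) := by rw [Int.even_iff]; push_cast; omega
  have hto : ¬ Even (((2*s : ℕ) : ℤ) + 1) := by rw [Int.even_iff]; push_cast; omega
  -- invariants at level 2s
  have hinv := invariants (2*s)
  have hO1 := ((hinv X).1 (even_two_mul s)).1 (by rw [hX]; push_cast; omega)
  have hO2 := ((hinv (X-2)).1 (even_two_mul s)).2 (by rw [hX]; push_cast; omega)
  rw [show X - 2 + 2 = X from by ring] at hO2
  have hqq : qq (X-2) (2*s) = qq X (2*s) := by linarith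
  -- step down from 2s+2 to 2s+1 to 2s
  have e1 : qq X (2*s+2) = qq (X+1) (2*s+1) - pp (X+1) (2*s+1) := by
    have h := qq_succ X (2*s+1)
    rw [uHom_odd_fst _ hXodd] at h
    rw [show 2*s+1+1 = 2*s+2 from rfl] at h
    rw [h]; ring
  have e2 : qq (X+1) (2*s+1) = qq (X+2) (2*s) - pp (X+2) (2*s) := by
    have h := qq_succ (X+1) (2*s)
    rw [uHom_odd_snd _ hto] at h
    rw [show X+1+1 = X+2 from by ring] at h
    rw [h]; ring
  have e3 : pp (X+1) (2*s+1) = pp X (2*s) + qq X (2*s) := by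
    have h := pp_succ (X+1) (2*s)
    rw [uHom_odd_snd _ hto] at h
    rw [show X+1-1 = X from by ring] at h
    rw [h]; ring
  have e4 : pp X (2*s+2) = -(pp (X-1) (2*s+1) + qq (X-1) (2*s+1)) := by
    have h := pp_succ X (2*s+1)
    rw [show ((2*s+1 : ℕ) : ℤ) + 1 = ((2*s+1 : ℕ) : ℤ) + 1 from rfl] at h
    rw [uHom_even hX1e hte] at h
    rw [show 2*s+1+1 = 2*s+2 from rfl] at h
    rw [h]; ring
  have e5 : pp (X-1) (2*s+1) = pp (X-2) (2*s) + qq (X-2) (2*s) := by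
    have h := pp_succ (X-1) (2*s)
    rw [uHom_odd_snd _ hto] at h
    rw [show X-1-1 = X-2 from by ring] at h
    rw [h]; ring
  have e6 : qq (X-1) (2*s+1) = qq X (2*s) - pp X (2*s) := by
    have h := qq_succ (X-1) (2*s)
    rw [uHom_odd_snd _ hto] at h
    rw [show X-1+1 = X from by ring] at h
    rw [h]; ring
  constructor
  · rw [hrel, e1, e2, e3]
    linear_combination c2 * hO1
  · rw [hrel, e4, e5, e6]
    linear_combination c2 * hO1 + 2 * c2 * hqq
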